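/- Let H be a complex Hilbert space and let M_A and M_B be von Neumann algebras on H that commute (a * b = b * a for all a ∈ M_A, b ∈ M_B), and suppose every operator x ∈ M_A.commutant ∩ M_B.commutant is a scalar multiple of the identity. If unit vectors Ψ, Φ ∈ H satisfy ⟪Ψ, a * b Ψ⟫ = ⟪Φ, a * b Φ⟫ for all a ∈ M_A and b ∈ M_B, then there exists c : ℂ with ‖c‖ = 1 and Φ = c • Ψ; i.e., pure states are determined by local correlation functions. -/

import Mathlib

open scoped InnerProductSpace
open ContinuousLinearMap

noncomputable section

namespace PureStateAux

variable {H : Type*} [NormedAddCommGroup H] [InnerProductSpace ℂ H] [CompleteSpace H]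

/-- The equivalence with the plain product. -/
def e2 : WithLp 2 (H × H) ≃L[ℂ] H × H := WithLp.prodContinuousLinearEquiv 2 ℂ H H

/-- The diagonal action of an operator on `H ⊕₂ H`. -/
def diag2 (a : H →L[ℂ] H) : WithLp 2 (H × H) →L[ℂ] WithLp 2 (H × H) :=
  ((e2.symm.toContinuousLinearMap.comp (a.prodMap a)).comp e2.toContinuousLinearMap)

omit [CompleteSpace H] in
lemma inner2 (x y : WithLp 2 (H × H)) :
    ⟪x, y⟫_ℂ = ⟪(e2 x).1, (e2 y).1⟫_ℂ + ⟪(e2 x).2, (e2 y).2⟫_ℂ :=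
  WithLp.prod_inner_apply x y

omit [CompleteSpace H] in
lemma e2_diag2 (a : H →L[ℂ] H) (x : WithLp 2 (H × H)) :
    e2 (diag2 a x) = (a (e2 x).1, a (e2 x).2) := by
  simp [diag2, e2, Prod.map]

lemma adjoint_diag2 (a : H →L[ℂ] H) :
    ContinuousLinearMap.adjoint (diag2 a) = diag2 (ContinuousLinearMap.adjoint a) := by
  symm
  rw [eq_adjoint_iff]
  intro x y
  rw [inner2, inner2, e2_diag2, e2_diag2]
  simp [adjoint_inner_left]

/-- If a closed subspace is invariant under `T` and `T†`, the orthogonal projection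
onto it commutes with `T`. -/
lemma proj_comm {E : Type*} [NormedAddCommGroup E] [InnerProductSpace ℂ E] [CompleteSpace E]
    (K : Submodule ℂ E) [K.HasOrthogonalProjection] (T : E →L[ℂ] E)
    (h1 : ∀ v ∈ K, T v ∈ K)
    (h2 : ∀ v ∈ K, ContinuousLinearMap.adjoint T v ∈ K) (v : E) :
    (K.orthogonalProjectionOnto (T v) : E) = T (K.orthogonalProjectionOnto v) := by
  refine Submodule.eq_starProjection_of_mem_orthogonal
    (h1 _ (K.orthogonalProjectionOnto v).2) ?_
  have hv : v - K.orthogonalProjectionOnto v ∈ Kᗮ := K.sub_starProjection_mem_orthogonal v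
  rw [Submodule.mem_orthogonal]
  intro u hu
  have : T v - T (K.orthogonalProjectionOnto v) = T (v - K.orthogonalProjectionOnto v) := by
    rw [map_sub]
  rw [this, ← adjoint_inner_left]
  exact (Submodule.mem_orthogonal _ _).1 hv _ (h2 u hu)

end PureStateAux

end

open PureStateAux

/-- Under local tomography, pure states are determined by their local correlation
functions, up to a global phase. -/
theorem pure_state_localTomography {H : Type*} [NormedAddCommGroup H]
    [InnerProductSpace ℂ H] [CompleteSpace H]
    (M_A M_B : VonNeumannAlgebra H)
    (hcomm : ∀ a ∈ M_A, ∀ b ∈ M_B, a * b = b * a)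
    (htomo : ∀ x : H →L[ℂ] H, x ∈ M_A.commutant → x ∈ M_B.commutant →
      ∃ c : ℂ, x = c • 1)
    (Ψ Φ : H) (hΨ : ‖Ψ‖ = 1) (hΦ : ‖Φ‖ = 1)
    (hcorr : ∀ a ∈ M_A, ∀ b ∈ M_B, ⟪Ψ, (a * b) Ψ⟫_ℂ = ⟪Φ, (a * b) Φ⟫_ℂ) :
    ∃ c : ℂ, ‖c‖ = 1 ∧ Φ = c • Ψ := by
  classical
  set E := WithLp 2 (H × H)
  -- the span of products a * b
  set Sgen : Set (H →L[ℂ] H) := {x | ∃ a ∈ M_A, ∃ b ∈ M_B, x = a * b} with hSgen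
  set W : Submodule ℂ (H →L[ℂ] H) := Submodule.span ℂ Sgen with hW
  -- W is invariant under left multiplication by elements of M_A and M_B
  have hWA : ∀ a ∈ M_A, ∀ x ∈ W, a * x ∈ W := by
    intro a ha x hx
    induction hx using Submodule.span_induction with
    | mem x hx =>
      obtain ⟨a', ha', b', hb', rfl⟩ := hx
      exact Submodule.subset_span ⟨a * a', mul_mem ha ha', b', hb', (mul_assoc _ _ _).symm⟩
    | zero => simpa using zero_mem W
    | add x y _ _ hx hy => rw [mul_add]; exact add_mem hx hy
    | smul c x _ hx => rw [mul_smul_comm]; exact Submodule.smul_mem _ _ hx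
  have hWB : ∀ b ∈ M_B, ∀ x ∈ W, b * x ∈ W := by
    intro b hb x hx
    induction hx using Submodule.span_induction with
    | mem x hx =>
      obtain ⟨a', ha', b', hb', rfl⟩ := hx
      refine Submodule.subset_span ⟨a', ha', b * b', mul_mem hb hb', ?_⟩
      rw [← mul_assoc, ← hcomm a' ha' b hb, mul_assoc]
    | zero => simpa using zero_mem W
    | add x y _ _ hx hy => rw [mul_add]; exact add_mem hx hy
    | smul c x _ hx => rw [mul_smul_comm]; exact Submodule.smul_mem _ _ hx
  -- correlations agree on all of W
  have hcorrW : ∀ x ∈ W, ⟪Ψ, x Ψ⟫_ℂ = ⟪Φ, x Φ⟫_ℂ := by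
    intro x hx
    induction hx using Submodule.span_induction with
    | mem x hx => obtain ⟨a, ha, b, hb, rfl⟩ := hx; exact hcorr a ha b hb
    | zero => simp
    | add x y _ _ hx hy => simp [inner_add_right, hx, hy]
    | smul c x _ hx => simp [inner_smul_right, hx]
  -- evaluation map
  let ev : (H →L[ℂ] H) →ₗ[ℂ] E :=
    { toFun := fun x => e2.symm (x Ψ, x Φ)
      map_add' := by intro x y; simp [← Prod.mk_add_mk]
      map_smul' := by intro c x; simp [← Prod.smul_mk] }
  set V : Submodule ℂ E := W.map ev with hV
  set K : Submodule ℂ E := V.topologicalClosure with hK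
  haveI : CompleteSpace K := (Submodule.isClosed_topologicalClosure V).completeSpace_coe
  -- invariance of K under the diagonal action of W-multipliers
  have hKinv : ∀ a : H →L[ℂ] H, (∀ x ∈ W, a * x ∈ W) → ∀ y ∈ K, diag2 a y ∈ K := by
    intro a haW y hy
    have hVinv : diag2 a '' (V : Set E) ⊆ (V : Set E) := by
      rintro _ ⟨_, ⟨x, hx, rfl⟩, rfl⟩
      refine ⟨a * x, haW x hx, ?_⟩
      apply e2.injective
      rw [e2_diag2]
      simp [ev, mul_apply]
    have : diag2 a y ∈ closure (diag2 a '' (V : Set E)) :=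
      image_closure_subset_closure_image (diag2 a).continuous ⟨y, hy, rfl⟩
    exact closure_mono hVinv this
  -- the orthogonal projection onto K
  set P : E →L[ℂ] E := K.subtypeL.comp (K.orthogonalProjectionOnto) with hP
  have hPcomm : ∀ a : H →L[ℂ] H, (∀ x ∈ W, a * x ∈ W) →
      (∀ x ∈ W, ContinuousLinearMap.adjoint a * x ∈ W) →
      ∀ v : E, P (diag2 a v) = diag2 a (P v) := by
    intro a h1 h2 v
    have := proj_comm K (diag2 a) (hKinv a h1) ?_ v
    · simpa [hP] using this
    · intro w hw
      rw [adjoint_diag2]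
      exact hKinv _ h2 w hw
  -- matrix entry maps
  let fstL : E →L[ℂ] H := (ContinuousLinearMap.fst ℂ H H).comp e2.toContinuousLinearMap
  let inlL : H →L[ℂ] E := e2.symm.toContinuousLinearMap.comp (ContinuousLinearMap.inl ℂ H H)
  let inrL : H →L[ℂ] E := e2.symm.toContinuousLinearMap.comp (ContinuousLinearMap.inr ℂ H H)
  set P11 : H →L[ℂ] H := (fstL.comp P).comp inlL with hP11
  set P12 : H →L[ℂ] H := (fstL.comp P).comp inrL with hP12
  -- entries commute with everything commuting diagonally with P
  have hent : ∀ a : H →L[ℂ] H, (∀ v : E, P (diag2 a v) = diag2 a (P v)) →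
      a * P11 = P11 * a ∧ a * P12 = P12 * a := by
    intro a hc
    have hfst : ∀ z : E, fstL (diag2 a z) = a (fstL z) := by
      intro z
      show (e2 (diag2 a z)).1 = a (e2 z).1
      rw [e2_diag2]
    have hinl : ∀ v : H, diag2 a (inlL v) = inlL (a v) := by
      intro v
      apply e2.injective
      rw [e2_diag2]
      simp [inlL]
    have hinr : ∀ v : H, diag2 a (inrL v) = inrL (a v) := by
      intro v
      apply e2.injective
      rw [e2_diag2]
      simp [inrL]
    have key : ∀ (j : H →L[ℂ] E), (∀ v, diag2 a (j v) = j (a v)) →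
        a * ((fstL.comp P).comp j) = ((fstL.comp P).comp j) * a := by
      intro j hj
      ext v
      simp only [mul_apply_eq_comp, comp_apply]
      rw [← hfst, ← hc, hj]
    exact ⟨key inlL hinl, key inrL hinr⟩
  -- entries are in both commutants
  have hmemA : ∀ a : H →L[ℂ] H, a ∈ M_A → (∀ v : E, P (diag2 a v) = diag2 a (P v)) := by
    intro a ha
    refine hPcomm a (hWA a ha) ?_
    rw [← star_eq_adjoint]
    exact hWA _ (star_mem ha)
  have hmemB : ∀ b : H →L[ℂ] H, b ∈ M_B → (∀ v : E, P (diag2 b v) = diag2 b (P v)) := by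
    intro b hb
    refine hPcomm b (hWB b hb) ?_
    rw [← star_eq_adjoint]
    exact hWB _ (star_mem hb)
  have h11 : ∃ c : ℂ, P11 = c • 1 := by
    refine htomo P11 ?_ ?_ <;> rw [VonNeumannAlgebra.mem_commutant_iff]
    · exact fun g hg => (hent g (hmemA g hg)).1
    · exact fun g hg => (hent g (hmemB g hg)).1
  have h12 : ∃ c : ℂ, P12 = c • 1 := by
    refine htomo P12 ?_ ?_ <;> rw [VonNeumannAlgebra.mem_commutant_iff]
    · exact fun g hg => (hent g (hmemA g hg)).2
    · exact fun g hg => (hent g (hmemB g hg)).2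
  obtain ⟨α, hα⟩ := h11
  obtain ⟨β, hβ⟩ := h12
  -- the vector (Ψ, Φ) is in K and fixed by P
  have hone : (1 : H →L[ℂ] H) ∈ W :=
    Submodule.subset_span ⟨1, one_mem M_A, 1, one_mem M_B, (one_mul 1).symm⟩
  set ψφ : E := e2.symm (Ψ, Φ) with hψφ
  have hψφK : ψφ ∈ K := by
    refine Submodule.le_topologicalClosure V ⟨1, hone, ?_⟩
    simp [ev, hψφ]
  have hPψφ : P ψφ = ψφ := by
    have : (K.orthogonalProjectionOnto ψφ : E) = ψφ :=
      Submodule.eq_starProjection_of_mem_orthogonal hψφK (by simp)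
    simpa [hP] using this
  -- the vector (Ψ, -Φ) is orthogonal to K and killed by P
  set χ : E := e2.symm (Ψ, -Φ) with hχ
  have hχorth : χ ∈ Kᗮ := by
    rw [Submodule.mem_orthogonal']
    intro u hu
    have hcl : (K : Set E) ⊆ {u : E | ⟪χ, u⟫_ℂ = 0} := by
      have hclosed : IsClosed {u : E | ⟪χ, u⟫_ℂ = 0} := by
        have : {u : E | ⟪χ, u⟫_ℂ = 0} = (innerSL ℂ χ) ⁻¹' {0} := rfl
        rw [this]
        exact IsClosed.preimage (innerSL ℂ χ).continuous isClosed_singleton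
      have hsub : (V : Set E) ⊆ {u : E | ⟪χ, u⟫_ℂ = 0} := by
        rintro _ ⟨x, hx, rfl⟩
        have := hcorrW x hx
        simp only [Set.mem_setOf_eq]
        rw [inner2]
        simp only [ev, hχ, LinearMap.coe_mk, AddHom.coe_mk, ContinuousLinearEquiv.apply_symm_apply]
        rw [inner_neg_left]
        rw [this]
        ring
      exact closure_minimal hsub hclosed
    exact hcl hu
  have hPχ : P χ = 0 := by
    have : K.orthogonalProjectionOnto χ = 0 :=
      Submodule.orthogonalProjectionOnto_apply_of_mem_orthogonal hχorth
    simp [hP, this]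
  -- decompose ψφ and χ
  have hdec1 : ψφ = inlL Ψ + inrL Φ := by
    apply e2.injective
    simp [hψφ, inlL, inrL, Prod.ext_iff]
  have hdec2 : χ = inlL Ψ - inrL Φ := by
    apply e2.injective
    simp [hχ, inlL, inrL, Prod.ext_iff]
  have hfst_ψφ : fstL ψφ = Ψ := by simp [hψφ, fstL]
  -- P11 Ψ + P12 Φ = Ψ
  have heq1 : α • Ψ + β • Φ = Ψ := by
    have h1 : fstL (P ψφ) = Ψ := by rw [hPψφ, hfst_ψφ]
    rw [hdec1, map_add, map_add] at h1
    have e1 : fstL (P (inlL Ψ)) = P11 Ψ := rfl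
    have e2' : fstL (P (inrL Φ)) = P12 Φ := rfl
    rw [e1, e2', hα, hβ] at h1
    simpa using h1
  have heq2 : α • Ψ - β • Φ = 0 := by
    have h1 : fstL (P χ) = 0 := by rw [hPχ]; simp
    rw [hdec2, map_sub, map_sub] at h1
    have e1 : fstL (P (inlL Ψ)) = P11 Ψ := rfl
    have e2' : fstL (P (inrL Φ)) = P12 Φ := rfl
    rw [e1, e2', hα, hβ] at h1
    simpa using h1
  -- conclude: (2β) • Φ = Ψ
  have hkey : (2 * β) • Φ = Ψ := by
    have := sub_eq_of_eq_add' (heq1.symm)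
    -- α•Ψ + β•Φ = Ψ and α•Ψ = β•Φ
    have h2 : α • Ψ = β • Φ := by linear_combination (norm := module) heq2
    rw [h2] at heq1
    rw [two_mul, add_smul]
    linear_combination (norm := module) heq1
  have hβne : (2 * β) ≠ 0 := by
    intro h
    rw [h, zero_smul] at hkey
    rw [← hkey] at hΨ
    simp at hΨ
  refine ⟨(2 * β)⁻¹, ?_, ?_⟩
  · have : ‖(2*β)⁻¹ • Ψ‖ = ‖Φ‖ := by
      rw [← hkey, smul_smul, inv_mul_cancel₀ hβne, one_smul]
    rw [norm_smul, hΨ, hΦ, mul_one] at this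
    simpa using this
  · rw [← hkey, smul_smul, inv_mul_cancel₀ hβne, one_smul]
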